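/- Let X be a finite set, P a probability distribution on X, and X₁, …, Xₙ i.i.d. samples from P. Let P̂ be the empirical distribution P̂(x) := (1/n)·Σ_{i=1}^n 1{Xᵢ = x}. Then for every δ ∈ (0,1), with probability at least 1 − δ, Σ_{x ∈ X} |P(x) − P̂(x)| ≤ √(|X|/n) + √(2·log(1/δ)/n). -/

import Mathlib

set_option linter.unusedSectionVars false
set_option linter.unusedVariables false
set_option maxHeartbeats 1000000

open MeasureTheory


open Real

/-- Scalar core of Hoeffding's lemma. -/
lemma hoeffding_core (γ : ℝ) (hγ0 : 0 ≤ γ) (hγ1 : γ ≤ 1) (h : ℝ) :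
    1 - γ + γ * Real.exp h ≤ Real.exp (γ * h + h ^ 2 / 8) := by
  rcases eq_or_lt_of_le hγ0 with rfl | hγ0'
  · simpa using Real.one_le_exp (by positivity)
  set D : ℝ → ℝ := fun t => 1 - γ + γ * Real.exp t with hD
  have hDpos : ∀ t, 0 < D t := fun t => by
    have := Real.exp_pos t; simp only [hD]; nlinarith
  set F : ℝ → ℝ := fun t => γ * t + t ^ 2 / 8 - Real.log (D t) with hF
  set F' : ℝ → ℝ := fun t => γ + t / 4 - γ * Real.exp t / D t with hF'
  have hDer : ∀ t, HasDerivAt F (F' t) t := by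
    intro t
    have hd : HasDerivAt D (γ * Real.exp t) t := by
      exact ((Real.hasDerivAt_exp t).const_mul γ).const_add (1 - γ)
    have hlog : HasDerivAt (fun t => Real.log (D t)) (γ * Real.exp t / D t) t :=
      hd.log (hDpos t).ne'
    have h1 : HasDerivAt (fun t => γ * t + t ^ 2 / 8) (γ + t / 4) t := by
      have := ((hasDerivAt_pow 2 t).div_const 8).const_add (γ * t)
      have h2 : HasDerivAt (fun t => γ * t) γ t := by simpa using (hasDerivAt_id t).const_mul γ
      have := h2.add ((hasDerivAt_pow 2 t).div_const 8)
      exact this.congr_deriv (by norm_num; ring)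
    exact h1.sub hlog
  have hDer' : ∀ t, HasDerivAt F' (1 / 4 - γ * (1 - γ) * Real.exp t / (D t) ^ 2) t := by
    intro t
    have hd : HasDerivAt D (γ * Real.exp t) t := by
      exact ((Real.hasDerivAt_exp t).const_mul γ).const_add (1 - γ)
    have hnum : HasDerivAt (fun t => γ * Real.exp t) (γ * Real.exp t) t :=
      (Real.hasDerivAt_exp t).const_mul γ
    have hq : HasDerivAt (fun t => γ * Real.exp t / D t)
        ((γ * Real.exp t * D t - γ * Real.exp t * (γ * Real.exp t)) / (D t) ^ 2) t :=
      hnum.div hd (hDpos t).ne'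
    have h1 : HasDerivAt (fun t => γ + t / 4) (1 / 4) t := by
      simpa using ((hasDerivAt_id t).div_const 4).const_add γ
    have := h1.sub hq
    refine this.congr_deriv ?_
    have : D t = 1 - γ + γ * Real.exp t := rfl
    have hne : 1 - γ + γ * Real.exp t ≠ 0 := (hDpos t).ne'
    rw [this]
    field_simp
    ring
  have hF''nonneg : ∀ t, 0 ≤ 1 / 4 - γ * (1 - γ) * Real.exp t / (D t) ^ 2 := by
    intro t
    have he := Real.exp_pos t
    have hDt : D t = 1 - γ + γ * Real.exp t := rfl
    have h4 : 4 * (γ * (1 - γ) * Real.exp t) ≤ (D t) ^ 2 := by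
      rw [hDt]; nlinarith [sq_nonneg (1 - γ - γ * Real.exp t)]
    have hD2 : 0 < (D t) ^ 2 := pow_pos (hDpos t) 2
    rw [sub_nonneg, div_le_iff₀ hD2]
    rw [hDt] at h4 ⊢
    nlinarith [h4]
  have hF'mono : Monotone F' :=
    monotone_of_deriv_nonneg (fun t => (hDer' t).differentiableAt)
      (fun t => by rw [(hDer' t).deriv]; exact hF''nonneg t)
  have hF'0 : F' 0 = 0 := by
    have : D 0 = 1 := by simp [hD]
    simp [hF', this]
  have hF0 : F 0 = 0 := by
    have : D 0 = 1 := by simp [hD]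
    simp [hF, this]
  have hFnonneg : ∀ t, 0 ≤ F t := by
    intro t
    rcases le_total 0 t with ht | ht
    · have hmono : MonotoneOn F (Set.Ici (0:ℝ)) := by
        apply monotoneOn_of_deriv_nonneg (convex_Ici 0)
          (Continuous.continuousOn (by
            have : ∀ t, DifferentiableAt ℝ F t := fun t => (hDer t).differentiableAt
            exact (Differentiable.continuous (fun t => (hDer t).differentiableAt))))
          (fun t ht => (hDer t).differentiableAt.differentiableWithinAt)
        intro s hs
        rw [(hDer s).deriv]
        have : (0:ℝ) ≤ s := le_of_lt (by simpa using hs)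
        calc (0:ℝ) = F' 0 := hF'0.symm
          _ ≤ F' s := hF'mono this
      have := hmono (Set.self_mem_Ici) (by exact ht) ht
      linarith [hF0 ▸ this]
    · have hmono : AntitoneOn F (Set.Iic (0:ℝ)) := by
        apply antitoneOn_of_deriv_nonpos (convex_Iic 0)
          (Continuous.continuousOn (by
            have : ∀ t, DifferentiableAt ℝ F t := fun t => (hDer t).differentiableAt
            exact (Differentiable.continuous (fun t => (hDer t).differentiableAt))))
          (fun t ht => (hDer t).differentiableAt.differentiableWithinAt)
        intro s hs
        rw [(hDer s).deriv]
        have : s ≤ (0:ℝ) := le_of_lt (by simpa using hs)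
        calc F' s ≤ F' 0 := hF'mono this
          _ = 0 := hF'0
      have := hmono (by exact ht) (Set.self_mem_Iic) ht
      linarith [hF0 ▸ this]
  have hlog : Real.log (D h) ≤ γ * h + h ^ 2 / 8 := by
    have := hFnonneg h
    simp only [hF] at this; linarith
  calc D h = Real.exp (Real.log (D h)) := (Real.exp_log (hDpos h)).symm
    _ ≤ Real.exp (γ * h + h ^ 2 / 8) := Real.exp_le_exp.mpr hlog

/-- Hoeffding's lemma, finite version. -/
lemma hoeffding_finite {Ω : Type*} [Fintype Ω] (p : Ω → ℝ) (hp : ∀ x, 0 ≤ p x)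
    (hp1 : ∑ x, p x = 1) (g : Ω → ℝ) (a b t : ℝ)
    (ha : ∀ x, a ≤ g x) (hb : ∀ x, g x ≤ b) :
    ∑ x, p x * Real.exp (t * g x) ≤
      Real.exp (t * (∑ x, p x * g x) + t ^ 2 * (b - a) ^ 2 / 8) := by
  set μ := ∑ x, p x * g x with hμ
  have hμa : a ≤ μ := by
    calc a = ∑ x, p x * a := by rw [← Finset.sum_mul, hp1, one_mul]
      _ ≤ μ := Finset.sum_le_sum fun x _ => mul_le_mul_of_nonneg_left (ha x) (hp x)
  have hμb : μ ≤ b := by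
    calc μ ≤ ∑ x, p x * b := Finset.sum_le_sum fun x _ => mul_le_mul_of_nonneg_left (hb x) (hp x)
      _ = b := by rw [← Finset.sum_mul, hp1, one_mul]
  rcases eq_or_lt_of_le (le_trans (hμa) (hμb)) with hab | hab
  ·
    -- then g x = a for all x
    have hga : ∀ x, g x = a := fun x => le_antisymm (hab ▸ hb x) (ha x)
    have : μ = a := le_antisymm (hab ▸ hμb) hμa
    have hab' : a = b := hab
    calc ∑ x, p x * Real.exp (t * g x) = ∑ x, p x * Real.exp (t * a) := by
          simp_rw [fun x => hga x]
      _ = Real.exp (t * a) := by rw [← Finset.sum_mul, hp1, one_mul]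
      _ ≤ Real.exp (t * μ + t ^ 2 * (b - a) ^ 2 / 8) := by
          apply Real.exp_le_exp.mpr; rw [this]; nlinarith [sq_nonneg (t*(b-a))]
  · have hba : 0 < b - a := by linarith
    set γ := (μ - a) / (b - a) with hγ
    have hγ0 : 0 ≤ γ := div_nonneg (by linarith) hba.le
    have hγ1 : γ ≤ 1 := by rw [div_le_one hba]; linarith
    have step1 : ∑ x, p x * Real.exp (t * g x) ≤
        ((b - μ) * Real.exp (t * a) + (μ - a) * Real.exp (t * b)) / (b - a) := by
      have hconv : ∀ x, Real.exp (t * g x) ≤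
          ((b - g x) * Real.exp (t * a) + (g x - a) * Real.exp (t * b)) / (b - a) := by
        intro x
        have hl0 : 0 ≤ (b - g x) / (b - a) := div_nonneg (by linarith [hb x]) hba.le
        have hl0' : 0 ≤ (g x - a) / (b - a) := div_nonneg (by linarith [ha x]) hba.le
        have hls : (b - g x) / (b - a) + (g x - a) / (b - a) = 1 := by
          field_simp
          ring
        have := convexOn_exp.2 (Set.mem_univ (t * a)) (Set.mem_univ (t * b))
          hl0 hl0' hls
        simp only [smul_eq_mul] at this
        have harg : (b - g x) / (b - a) * (t * a) + (g x - a) / (b - a) * (t * b) = t * g x := by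
          field_simp; ring
        rw [harg] at this
        calc Real.exp (t * g x) ≤ (b - g x) / (b - a) * Real.exp (t * a)
              + (g x - a) / (b - a) * Real.exp (t * b) := this
          _ = ((b - g x) * Real.exp (t * a) + (g x - a) * Real.exp (t * b)) / (b - a) := by
              ring
      set A := Real.exp (t * a)
      set B := Real.exp (t * b)
      have hc : (b - a) ≠ 0 := hba.ne'
      have expand : ∀ x, p x * (((b - g x) * A + (g x - a) * B) / (b - a)) =
          (b * A - a * B) / (b - a) * p x + (B - A) / (b - a) * (p x * g x) := by
        intro x; field_simp; ring
      calc ∑ x, p x * Real.exp (t * g x)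
          ≤ ∑ x, p x * (((b - g x) * A + (g x - a) * B) / (b - a)) :=
            Finset.sum_le_sum fun x _ => mul_le_mul_of_nonneg_left (hconv x) (hp x)
        _ = (b * A - a * B) / (b - a) * (∑ x, p x) + (B - A) / (b - a) * μ := by
            simp_rw [expand, Finset.sum_add_distrib, ← Finset.mul_sum]
            rfl
        _ = ((b - μ) * A + (μ - a) * B) / (b - a) := by
            rw [hp1]; field_simp; ring
    -- now apply the core inequality
    have hcore := hoeffding_core γ hγ0 hγ1 (t * (b - a))
    have key : ((b - μ) * Real.exp (t * a) + (μ - a) * Real.exp (t * b)) / (b - a) ≤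
        Real.exp (t * μ + t ^ 2 * (b - a) ^ 2 / 8) := by
      have hmul := mul_le_mul_of_nonneg_left hcore (Real.exp_pos (t * a)).le
      have lhs_eq : Real.exp (t * a) * (1 - γ + γ * Real.exp (t * (b - a))) =
          ((b - μ) * Real.exp (t * a) + (μ - a) * Real.exp (t * b)) / (b - a) := by
        have hEB : Real.exp (t * b) = Real.exp (t * a) * Real.exp (t * (b - a)) := by
          rw [← Real.exp_add]; ring_nf
        rw [hEB, hγ]; field_simp; ring
      have rhs_eq : Real.exp (t * a) * Real.exp (γ * (t * (b - a)) + (t * (b - a)) ^ 2 / 8) =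
          Real.exp (t * μ + t ^ 2 * (b - a) ^ 2 / 8) := by
        rw [← Real.exp_add]
        congr 1
        rw [hγ]; field_simp; ring
      rw [lhs_eq, rhs_eq] at hmul
      exact hmul
    exact le_trans step1 key

section Mc
variable {X : Type*} [Fintype X] [DecidableEq X] (p : X → ℝ)

/-- product weight -/
def W (n : ℕ) (ω : Fin n → X) : ℝ := ∏ i, p (ω i)

lemma W_nonneg (hp : ∀ x, 0 ≤ p x) (n : ℕ) (ω : Fin n → X) : 0 ≤ W p n ω :=
  Finset.prod_nonneg fun i _ => hp (ω i)

lemma sum_cons (n : ℕ) (F : (Fin (n+1) → X) → ℝ) :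
    ∑ ω : Fin (n+1) → X, F ω = ∑ x : X, ∑ ρ : Fin n → X, F (Fin.cons x ρ) := by
  calc ∑ ω : Fin (n+1) → X, F ω
      = ∑ z : X × (Fin n → X), F (Fin.cons z.1 z.2) :=
        (Fintype.sum_equiv (Fin.consEquiv fun _ => X) _ F (fun z => rfl)).symm
    _ = ∑ x : X, ∑ ρ : Fin n → X, F (Fin.cons x ρ) := Fintype.sum_prod_type _

lemma W_cons (n : ℕ) (x : X) (ρ : Fin n → X) :
    W p (n+1) (Fin.cons x ρ) = p x * W p n ρ := by
  unfold W
  rw [Fin.prod_univ_succ]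
  simp

lemma E_prod (n : ℕ) (φ : Fin n → X → ℝ) :
    ∑ ω : Fin n → X, ∏ i, φ i (ω i) = ∏ i, ∑ x, φ i x := (Fintype.prod_sum φ).symm

lemma sum_W (hp1 : ∑ x, p x = 1) (n : ℕ) : ∑ ω : Fin n → X, W p n ω = 1 := by
  unfold W
  rw [E_prod]
  simp [hp1]

lemma mcdiarmid_mgf (hp : ∀ x, 0 ≤ p x) (hp1 : ∑ x, p x = 1) (c t : ℝ) :
    ∀ (n : ℕ) (f : (Fin n → X) → ℝ),
      (∀ (i : Fin n) (ω ω' : Fin n → X), (∀ j, j ≠ i → ω j = ω' j) → f ω - f ω' ≤ c) →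
      ∑ ω : Fin n → X, W p n ω * Real.exp (t * f ω) ≤
        Real.exp (t * (∑ ω : Fin n → X, W p n ω * f ω) + t ^ 2 * n * c ^ 2 / 8) := by
  intro n
  induction n with
  | zero =>
    intro f _
    simp [W]
  | succ n ih =>
    intro f hdiff
    have hX : Nonempty X := by
      by_contra h
      rw [not_nonempty_iff] at h
      simp at hp1
    set g : X → ℝ := fun x => ∑ ρ : Fin n → X, W p n ρ * f (Fin.cons x ρ) with hg
    have hdiff' : ∀ x : X, ∀ (i : Fin n) (ρ ρ' : Fin n → X),
        (∀ j, j ≠ i → ρ j = ρ' j) → f (Fin.cons x ρ) - f (Fin.cons x ρ') ≤ c := by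
      intro x i ρ ρ' hagree
      apply hdiff i.succ
      intro j hj
      rcases Fin.eq_zero_or_eq_succ j with rfl | ⟨k, rfl⟩
      · simp
      · simp only [Fin.cons_succ]
        exact hagree k (fun hk => hj (by rw [hk]))
    have hIHx : ∀ x : X, ∑ ρ : Fin n → X, W p n ρ * Real.exp (t * f (Fin.cons x ρ)) ≤
        Real.exp (t * g x + t ^ 2 * n * c ^ 2 / 8) := fun x => ih _ (hdiff' x)
    have hosc : ∀ x y : X, g x - g y ≤ c := by
      intro x y
      have hrw : g x - g y = ∑ ρ : Fin n → X, W p n ρ * (f (Fin.cons x ρ) - f (Fin.cons y ρ)) := by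
        rw [hg]
        simp [mul_sub, Finset.sum_sub_distrib]
      rw [hrw]
      calc ∑ ρ : Fin n → X, W p n ρ * (f (Fin.cons x ρ) - f (Fin.cons y ρ))
          ≤ ∑ ρ : Fin n → X, W p n ρ * c := by
            apply Finset.sum_le_sum
            intro ρ _
            apply mul_le_mul_of_nonneg_left _ (W_nonneg p hp n ρ)
            apply hdiff 0
            intro j hj
            rcases Fin.eq_zero_or_eq_succ j with rfl | ⟨k, rfl⟩
            · exact absurd rfl hj
            · simp
        _ = c := by rw [← Finset.sum_mul, sum_W p hp1, one_mul]
    obtain ⟨x₀, -, hmin⟩ := Finset.exists_min_image Finset.univ g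
      ⟨Classical.arbitrary X, Finset.mem_univ _⟩
    have hhoef := hoeffding_finite p hp hp1 g (g x₀) (g x₀ + c) t
      (fun x => hmin x (Finset.mem_univ x)) (fun x => by linarith [hosc x x₀])
    have hc2 : g x₀ + c - g x₀ = c := by ring
    rw [hc2] at hhoef
    have hEf : ∑ ω : Fin (n+1) → X, W p (n+1) ω * f ω = ∑ x, p x * g x := by
      rw [sum_cons]
      simp_rw [W_cons, hg, Finset.mul_sum]
      exact Finset.sum_congr rfl fun x _ => Finset.sum_congr rfl fun ρ _ => by ring
    calc ∑ ω : Fin (n+1) → X, W p (n+1) ω * Real.exp (t * f ω)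
        = ∑ x : X, p x * ∑ ρ : Fin n → X, W p n ρ * Real.exp (t * f (Fin.cons x ρ)) := by
          rw [sum_cons]
          simp_rw [W_cons, Finset.mul_sum]
          exact Finset.sum_congr rfl fun x _ => Finset.sum_congr rfl fun ρ _ => by ring
      _ ≤ ∑ x : X, p x * Real.exp (t * g x + t ^ 2 * n * c ^ 2 / 8) :=
          Finset.sum_le_sum fun x _ => mul_le_mul_of_nonneg_left (hIHx x) (hp x)
      _ = Real.exp (t ^ 2 * n * c ^ 2 / 8) * ∑ x : X, p x * Real.exp (t * g x) := by
          rw [Finset.mul_sum]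
          exact Finset.sum_congr rfl fun x _ => by rw [Real.exp_add]; ring
      _ ≤ Real.exp (t ^ 2 * n * c ^ 2 / 8) *
            Real.exp (t * (∑ x, p x * g x) + t ^ 2 * c ^ 2 / 8) :=
          mul_le_mul_of_nonneg_left hhoef (Real.exp_pos _).le
      _ = Real.exp (t * (∑ ω : Fin (n+1) → X, W p (n+1) ω * f ω)
            + t ^ 2 * (n+1 : ℕ) * c ^ 2 / 8) := by
          rw [← Real.exp_add, hEf]
          congr 1
          push_cast
          ring


def Nc (n : ℕ) (x : X) (ω : Fin n → X) : ℝ := ∑ i, if ω i = x then (1:ℝ) else 0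

lemma Nc_cons (n : ℕ) (x y : X) (ρ : Fin n → X) :
    Nc (n+1) x (Fin.cons y ρ) = (if y = x then (1:ℝ) else 0) + Nc n x ρ := by
  unfold Nc
  rw [Fin.sum_univ_succ]
  simp

lemma sum_p_ite (x : X) (c : ℝ) : ∑ y : X, p y * (if y = x then c else 0) = p x * c := by
  rw [Finset.sum_eq_single x (fun y _ hy => by simp [hy]) (fun h => absurd (Finset.mem_univ x) h)]
  simp

lemma E_N (hp1 : ∑ x, p x = 1) (x : X) :
    ∀ n : ℕ, ∑ ω : Fin n → X, W p n ω * Nc n x ω = n * p x := by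
  intro n
  induction n with
  | zero => simp [Nc]
  | succ n ih =>
    rw [sum_cons]
    have inner : ∀ y : X,
        ∑ ρ : Fin n → X, W p (n+1) (Fin.cons y ρ) * Nc (n+1) x (Fin.cons y ρ)
        = p y * ((if y = x then (1:ℝ) else 0) + n * p x) := by
      intro y
      simp_rw [W_cons, Nc_cons]
      have expand : ∀ ρ : Fin n → X,
          p y * W p n ρ * ((if y = x then (1:ℝ) else 0) + Nc n x ρ)
          = p y * ((if y = x then (1:ℝ) else 0) * W p n ρ) + p y * (W p n ρ * Nc n x ρ) := by
        intro ρ; ring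
      simp_rw [expand]
      rw [Finset.sum_add_distrib, ← Finset.mul_sum, ← Finset.mul_sum, ← Finset.mul_sum,
        sum_W p hp1, ih]
      ring
    simp_rw [inner]
    have expand2 : ∀ y : X, p y * ((if y = x then (1:ℝ) else 0) + n * p x)
        = p y * (if y = x then (1:ℝ) else 0) + (n * p x) * p y := by intro y; ring
    simp_rw [expand2]
    rw [Finset.sum_add_distrib, sum_p_ite, ← Finset.mul_sum, hp1]
    push_cast
    ring

lemma E_N2 (hp1 : ∑ x, p x = 1) (x : X) :
    ∀ n : ℕ, ∑ ω : Fin n → X, W p n ω * (Nc n x ω) ^ 2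
      = n * p x + (n * n - n) * p x ^ 2 := by
  intro n
  induction n with
  | zero => simp [Nc]
  | succ n ih =>
    rw [sum_cons]
    have inner : ∀ y : X,
        ∑ ρ : Fin n → X, W p (n+1) (Fin.cons y ρ) * (Nc (n+1) x (Fin.cons y ρ)) ^ 2
        = p y * ((if y = x then (1:ℝ) else 0) + 2 * (if y = x then (1:ℝ) else 0) * (n * p x)
            + (n * p x + (n * n - n) * p x ^ 2)) := by
      intro y
      simp_rw [W_cons, Nc_cons]
      set A := (if y = x then (1:ℝ) else 0) with hA
      have hA2 : A ^ 2 = A := by rw [hA]; split <;> norm_num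
      have expand : ∀ ρ : Fin n → X,
          p y * W p n ρ * (A + Nc n x ρ) ^ 2
          = p y * (A ^ 2 * W p n ρ) + p y * (2 * A * (W p n ρ * Nc n x ρ))
            + p y * (W p n ρ * (Nc n x ρ) ^ 2) := by
        intro ρ; ring
      simp_rw [expand]
      rw [Finset.sum_add_distrib, Finset.sum_add_distrib, ← Finset.mul_sum, ← Finset.mul_sum,
        ← Finset.mul_sum, ← Finset.mul_sum, ← Finset.mul_sum, sum_W p hp1, E_N p hp1 x n, ih,
        hA2]
      ring
    simp_rw [inner]
    have expand2 : ∀ y : X, p y * ((if y = x then (1:ℝ) else 0)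
          + 2 * (if y = x then (1:ℝ) else 0) * (n * p x)
          + (n * p x + (n * n - n) * p x ^ 2))
        = p y * (if y = x then (1:ℝ) + 2 * (n * p x) else 0)
          + (n * p x + (n * n - n) * p x ^ 2) * p y := by
      intro y; split <;> ring
    simp_rw [expand2]
    rw [Finset.sum_add_distrib, sum_p_ite, ← Finset.mul_sum, hp1]
    push_cast
    ring

/-- second moment of the deviation -/
lemma E_dev_sq (hp : ∀ x, 0 ≤ p x) (hp1 : ∑ x, p x = 1) (x : X) (n : ℕ) (hn : 0 < n) :
    ∑ ω : Fin n → X, W p n ω * (p x - (1 / n) * Nc n x ω) ^ 2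
      = p x * (1 - p x) / n := by
  have hn' : (n : ℝ) ≠ 0 := Nat.cast_ne_zero.mpr hn.ne'
  have expand : ∀ ω : Fin n → X,
      W p n ω * (p x - (1 / n) * Nc n x ω) ^ 2
      = p x ^ 2 * W p n ω - (2 * p x / n) * (W p n ω * Nc n x ω)
        + (1 / n ^ 2) * (W p n ω * (Nc n x ω) ^ 2) := by
    intro ω; field_simp; ring
  simp_rw [expand]
  rw [Finset.sum_add_distrib, Finset.sum_sub_distrib, ← Finset.mul_sum, ← Finset.mul_sum,
    ← Finset.mul_sum, sum_W p hp1, E_N p hp1 x n, E_N2 p hp1 x n]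
  field_simp
  ring

/-- Cauchy–Schwarz: E|Z| ≤ √(E Z²) for weights summing to 1. -/
lemma E_abs_le_sqrt {Ω : Type*} [Fintype Ω] (w : Ω → ℝ) (hw : ∀ ω, 0 ≤ w ω)
    (hw1 : ∑ ω, w ω = 1) (Z : Ω → ℝ) :
    ∑ ω, w ω * |Z ω| ≤ Real.sqrt (∑ ω, w ω * Z ω ^ 2) := by
  have key := Finset.sum_mul_sq_le_sq_mul_sq Finset.univ
    (fun ω => Real.sqrt (w ω)) (fun ω => Real.sqrt (w ω) * |Z ω|)
  have h1 : ∀ ω : Ω, Real.sqrt (w ω) * (Real.sqrt (w ω) * |Z ω|) = w ω * |Z ω| := by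
    intro ω; rw [← mul_assoc, Real.mul_self_sqrt (hw ω)]
  have h2 : ∀ ω : Ω, Real.sqrt (w ω) ^ 2 = w ω := fun ω => Real.sq_sqrt (hw ω)
  have h3 : ∀ ω : Ω, (Real.sqrt (w ω) * |Z ω|) ^ 2 = w ω * Z ω ^ 2 := by
    intro ω; rw [mul_pow, h2, sq_abs]
  simp_rw [h1, h2, h3] at key
  rw [hw1, one_mul] at key
  have hnn : 0 ≤ ∑ ω, w ω * |Z ω| :=
    Finset.sum_nonneg fun ω _ => mul_nonneg (hw ω) (abs_nonneg _)
  calc ∑ ω, w ω * |Z ω| = Real.sqrt ((∑ ω, w ω * |Z ω|) ^ 2) := (Real.sqrt_sq hnn).symm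
    _ ≤ Real.sqrt (∑ ω, w ω * Z ω ^ 2) := Real.sqrt_le_sqrt key

/-- Mean bound: E ‖P − P̂‖₁ ≤ √(|X|/n). -/
lemma mean_bound (hp : ∀ x, 0 ≤ p x) (hp1 : ∑ x, p x = 1) (n : ℕ) (hn : 0 < n) :
    ∑ ω : Fin n → X, W p n ω * (∑ x, |p x - (1 / n) * Nc n x ω|)
      ≤ Real.sqrt (Fintype.card X / n) := by
  have hswap : ∑ ω : Fin n → X, W p n ω * (∑ x, |p x - (1 / n) * Nc n x ω|)
      = ∑ x, ∑ ω : Fin n → X, W p n ω * |p x - (1 / n) * Nc n x ω| := by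
    simp_rw [Finset.mul_sum]
    rw [Finset.sum_comm]
  rw [hswap]
  have step1 : ∀ x : X, ∑ ω : Fin n → X, W p n ω * |p x - (1 / n) * Nc n x ω|
      ≤ Real.sqrt (p x * (1 - p x) / n) := by
    intro x
    have := E_abs_le_sqrt (W p n) (W_nonneg p hp n) (sum_W p hp1 n)
      (fun ω => p x - (1 / n) * Nc n x ω)
    rw [E_dev_sq p hp hp1 x n hn] at this
    exact this
  calc ∑ x, ∑ ω : Fin n → X, W p n ω * |p x - (1 / n) * Nc n x ω|
      ≤ ∑ x, Real.sqrt (p x * (1 - p x) / n) := Finset.sum_le_sum fun x _ => step1 x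
    _ ≤ Real.sqrt (Fintype.card X * ∑ x, p x * (1 - p x) / n) := by
        have key := Finset.sum_mul_sq_le_sq_mul_sq Finset.univ
          (fun _ : X => (1:ℝ)) (fun x => Real.sqrt (p x * (1 - p x) / n))
        have h2 : ∀ x : X, Real.sqrt (p x * (1 - p x) / n) ^ 2 = p x * (1 - p x) / n := by
          intro x
          apply Real.sq_sqrt
          have h0 := hp x
          have hpx1 : p x ≤ 1 := by
            calc p x ≤ ∑ y, p y := Finset.single_le_sum (fun y _ => hp y) (Finset.mem_univ x)
              _ = 1 := hp1
          apply div_nonneg (by nlinarith) (Nat.cast_nonneg n)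
        simp_rw [one_mul, one_pow, h2] at key
        simp only [Finset.sum_const, Finset.card_univ, nsmul_eq_mul, mul_one] at key
        have hnn : 0 ≤ ∑ x, Real.sqrt (p x * (1 - p x) / n) :=
          Finset.sum_nonneg fun x _ => Real.sqrt_nonneg _
        calc ∑ x, Real.sqrt (p x * (1 - p x) / n)
            = Real.sqrt ((∑ x, Real.sqrt (p x * (1 - p x) / n)) ^ 2) := (Real.sqrt_sq hnn).symm
          _ ≤ Real.sqrt (Fintype.card X * ∑ x, p x * (1 - p x) / n) := Real.sqrt_le_sqrt key
    _ ≤ Real.sqrt (Fintype.card X / n) := by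
        apply Real.sqrt_le_sqrt
        have hnpos : (0:ℝ) < n := by exact_mod_cast hn
        have hb : ∑ x, p x * (1 - p x) / n ≤ 1 / n := by
          rw [← Finset.sum_div]
          have h1 : ∑ x, p x * (1 - p x) ≤ 1 := by
            calc ∑ x, p x * (1 - p x) ≤ ∑ x, p x :=
                  Finset.sum_le_sum fun x _ => by nlinarith [hp x, sq_nonneg (p x)]
              _ = 1 := hp1
          gcongr
        calc (Fintype.card X : ℝ) * ∑ x, p x * (1 - p x) / n
            ≤ Fintype.card X * (1 / n) := mul_le_mul_of_nonneg_left hb (Nat.cast_nonneg _)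
          _ = Fintype.card X / n := by ring

lemma tail_bound (hp : ∀ x, 0 ≤ p x) (hp1 : ∑ x, p x = 1) (n : ℕ)
    (f : (Fin n → X) → ℝ) (c s t : ℝ) (ht : 0 ≤ t)
    (hdiff : ∀ (i : Fin n) (ω ω' : Fin n → X), (∀ j, j ≠ i → ω j = ω' j) → f ω - f ω' ≤ c) :
    ∑ ω ∈ Finset.univ.filter
        (fun ω : Fin n → X => (∑ ω', W p n ω' * f ω') + s < f ω), W p n ω
      ≤ Real.exp (-(t * s) + t ^ 2 * n * c ^ 2 / 8) := by
  set μ := ∑ ω', W p n ω' * f ω' with hμ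
  calc ∑ ω ∈ Finset.univ.filter (fun ω : Fin n → X => μ + s < f ω), W p n ω
      ≤ ∑ ω ∈ Finset.univ.filter (fun ω : Fin n → X => μ + s < f ω),
          W p n ω * Real.exp (t * (f ω - μ - s)) := by
        apply Finset.sum_le_sum
        intro ω hω
        rw [Finset.mem_filter] at hω
        have : (1:ℝ) ≤ Real.exp (t * (f ω - μ - s)) :=
          Real.one_le_exp (mul_nonneg ht (by linarith [hω.2]))
        nlinarith [W_nonneg p hp n ω]
    _ ≤ ∑ ω : Fin n → X, W p n ω * Real.exp (t * (f ω - μ - s)) :=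
        Finset.sum_le_sum_of_subset_of_nonneg (Finset.filter_subset _ _)
          (fun ω _ _ => mul_nonneg (W_nonneg p hp n ω) (Real.exp_pos _).le)
    _ = Real.exp (-(t * (μ + s))) * ∑ ω : Fin n → X, W p n ω * Real.exp (t * f ω) := by
        rw [Finset.mul_sum]
        apply Finset.sum_congr rfl
        intro ω _
        rw [show t * (f ω - μ - s) = -(t * (μ + s)) + t * f ω by ring, Real.exp_add]
        ring
    _ ≤ Real.exp (-(t * (μ + s))) * Real.exp (t * μ + t ^ 2 * n * c ^ 2 / 8) :=
        mul_le_mul_of_nonneg_left (mcdiarmid_mgf p hp hp1 c t n f hdiff) (Real.exp_pos _).le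
    _ = Real.exp (-(t * s) + t ^ 2 * n * c ^ 2 / 8) := by
        rw [← Real.exp_add]; congr 1; ring

lemma f_bdd (n : ℕ) (hn : 0 < n) (i : Fin n) (ω ω' : Fin n → X)
    (hagree : ∀ j, j ≠ i → ω j = ω' j) :
    (∑ x, |p x - (1 / n) * Nc n x ω|) - (∑ x, |p x - (1 / n) * Nc n x ω'|) ≤ 2 / n := by
  have hn' : (0:ℝ) < n := by exact_mod_cast hn
  have hNdiff : ∀ x : X, Nc n x ω - Nc n x ω'
      = (if ω i = x then (1:ℝ) else 0) - (if ω' i = x then (1:ℝ) else 0) := by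
    intro x
    unfold Nc
    rw [← Finset.sum_sub_distrib]
    apply Finset.sum_eq_single i
    · intro j _ hj
      rw [hagree j hj]; ring
    · intro h; exact absurd (Finset.mem_univ i) h
  rw [← Finset.sum_sub_distrib]
  have hterm : ∀ x : X, |p x - (1 / n) * Nc n x ω| - |p x - (1 / n) * Nc n x ω'|
      ≤ (1 / n) * ((if ω i = x then (1:ℝ) else 0) + (if ω' i = x then (1:ℝ) else 0)) := by
    intro x
    have h1 : |p x - (1 / n) * Nc n x ω| - |p x - (1 / n) * Nc n x ω'|
        ≤ |(1 / n) * Nc n x ω' - (1 / n) * Nc n x ω| := by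
      calc |p x - (1 / n) * Nc n x ω| - |p x - (1 / n) * Nc n x ω'|
          ≤ |(p x - (1 / n) * Nc n x ω) - (p x - (1 / n) * Nc n x ω')| :=
            abs_sub_abs_le_abs_sub _ _
        _ = |(1 / n) * Nc n x ω' - (1 / n) * Nc n x ω| := by rw [show (p x - (1 / n) * Nc n x ω) - (p x - (1 / n) * Nc n x ω') = (1 / n) * Nc n x ω' - (1 / n) * Nc n x ω by ring]
    refine h1.trans ?_
    rw [← mul_sub, abs_mul, abs_of_pos (by positivity : (0:ℝ) < 1 / n)]
    apply mul_le_mul_of_nonneg_left _ (by positivity)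
    rw [show Nc n x ω' - Nc n x ω = -(Nc n x ω - Nc n x ω') by ring, abs_neg, hNdiff x]
    split_ifs <;> norm_num
  calc ∑ x, (|p x - (1 / n) * Nc n x ω| - |p x - (1 / n) * Nc n x ω'|)
      ≤ ∑ x, (1 / n) * ((if ω i = x then (1:ℝ) else 0) + (if ω' i = x then (1:ℝ) else 0)) :=
        Finset.sum_le_sum fun x _ => hterm x
    _ = 2 / n := by
        rw [← Finset.mul_sum, Finset.sum_add_distrib]
        simp [Finset.sum_ite_eq]
        ring

lemma discrete_main (hp : ∀ x, 0 ≤ p x) (hp1 : ∑ x, p x = 1) (n : ℕ) (hn : 0 < n)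
    (δ : ℝ) (hδ : δ ∈ Set.Ioo (0:ℝ) 1) :
    ∑ ω ∈ Finset.univ.filter (fun ω : Fin n → X =>
        ¬ (∑ x, |p x - (1 / n) * Nc n x ω| ≤
          Real.sqrt (Fintype.card X / n) + Real.sqrt (2 * Real.log (1 / δ) / n))),
      W p n ω ≤ δ := by
  obtain ⟨hδ0, hδ1⟩ := hδ
  have hn' : (0:ℝ) < n := by exact_mod_cast hn
  have hL : 0 < Real.log (1 / δ) := Real.log_pos (by rw [lt_div_iff₀ hδ0]; linarith)
  set s := Real.sqrt (2 * Real.log (1 / δ) / n) with hs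
  have hs0 : 0 < s := Real.sqrt_pos.mpr (by positivity)
  have hs2 : s ^ 2 = 2 * Real.log (1 / δ) / n := Real.sq_sqrt (by positivity)
  set f := fun ω : Fin n → X => ∑ x, |p x - (1 / n) * Nc n x ω| with hf
  set μ := ∑ ω' : Fin n → X, W p n ω' * f ω' with hμ
  have hμle : μ ≤ Real.sqrt (Fintype.card X / n) := mean_bound p hp hp1 n hn
  have hsubset : Finset.univ.filter (fun ω : Fin n → X =>
        ¬ (f ω ≤ Real.sqrt (Fintype.card X / n) + s))
      ⊆ Finset.univ.filter (fun ω : Fin n → X => μ + s < f ω) := by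
    intro ω hω
    rw [Finset.mem_filter] at hω ⊢
    refine ⟨Finset.mem_univ _, ?_⟩
    have := hω.2
    push_neg at this
    linarith
  have htail := tail_bound p hp hp1 n f (2 / n) s ((n : ℝ) * s) (by positivity)
    (fun i ω ω' h => f_bdd p n hn i ω ω' h)
  have hexp : -(((n:ℝ) * s) * s) + ((n:ℝ) * s) ^ 2 * (n:ℝ) * (2 / n) ^ 2 / 8
      = Real.log δ := by
    have h1 : -(((n:ℝ) * s) * s) + ((n:ℝ) * s) ^ 2 * (n:ℝ) * (2 / n) ^ 2 / 8
        = -((n:ℝ) * s ^ 2) / 2 := by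
      field_simp
      ring
    rw [h1, hs2]
    have h2 : -((n:ℝ) * (2 * Real.log (1 / δ) / n)) / 2 = -Real.log (1 / δ) := by
      field_simp
    rw [h2, one_div, Real.log_inv, neg_neg]
  calc ∑ ω ∈ Finset.univ.filter (fun ω : Fin n → X =>
        ¬ (f ω ≤ Real.sqrt (Fintype.card X / n) + s)), W p n ω
      ≤ ∑ ω ∈ Finset.univ.filter (fun ω : Fin n → X => μ + s < f ω), W p n ω :=
        Finset.sum_le_sum_of_subset_of_nonneg hsubset
          (fun ω _ _ => W_nonneg p hp n ω)
    _ ≤ Real.exp (-(((n:ℝ) * s) * s) + ((n:ℝ) * s) ^ 2 * (n:ℝ) * (2 / n) ^ 2 / 8) := htail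
    _ = δ := by rw [hexp]; exact Real.exp_log hδ0


end Mc

lemma meas_coe {α : Type*} [MeasurableSpace α] [MeasurableSingletonClass α]
    (μ : Measure α) (t : Finset α) : μ ↑t = ∑ x ∈ t, μ {x} := by
  have h1 : (↑t : Set α) = ⋃ x ∈ t, {x} := by ext x; simp
  rw [h1, measure_biUnion_finset]
  · intro x _ y _ hxy
    exact Set.disjoint_singleton.mpr hxy
  · exact fun x _ => measurableSet_singleton x

/-- let `X` be a finite set, `P` a probability distribution on `X`, and
`X₁, …, Xₙ` i.i.d. samples from `P` (modelled by the product measure `P^{⊗n}` on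
`X^n`, the `i`-th sample being the `i`-th coordinate `ω i`). With
`P̂(x) := (1/n)·Σᵢ 1{Xᵢ = x}` the empirical distribution, for every `δ ∈ (0,1)`,
with probability at least `1 − δ`,
`Σ_{x ∈ X} |P(x) − P̂(x)| ≤ √(|X|/n) + √(2·log(1/δ)/n)`. -/
theorem stmt_18 {X : Type*} [Fintype X] [DecidableEq X]
    [MeasurableSpace X] [MeasurableSingletonClass X]
    (P : Measure X) [IsProbabilityMeasure P]
    (n : ℕ) (hn : 0 < n) (δ : ℝ) (hδ : δ ∈ Set.Ioo (0 : ℝ) 1) :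
    ENNReal.ofReal (1 - δ) ≤
      (Measure.pi fun _ : Fin n => P)
        {ω | ∑ x : X,
            |(P {x}).toReal - (1 / n) * ∑ i : Fin n, (if ω i = x then (1 : ℝ) else 0)| ≤
          Real.sqrt (Fintype.card X / n) + Real.sqrt (2 * Real.log (1 / δ) / n)} := by
  set p : X → ℝ := fun x => (P {x}).toReal with hpdef
  have hp : ∀ x, 0 ≤ p x := fun x => ENNReal.toReal_nonneg
  have hp1 : ∑ x, p x = 1 := by
    have h1 : ∑ x : X, P {x} = 1 := by
      have := meas_coe P Finset.univ
      rw [Finset.coe_univ] at this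
      rw [← this, measure_univ]
    have h2' : ∀ x ∈ Finset.univ, P {x} ≠ ⊤ := fun x _ => measure_ne_top P _
    calc ∑ x, p x = (∑ x : X, P {x}).toReal := by
          rw [ENNReal.toReal_sum h2']
        _ = 1 := by rw [h1, ENNReal.toReal_one]
  set μπ := Measure.pi fun _ : Fin n => P with hμπ
  set ε := Real.sqrt (Fintype.card X / n) + Real.sqrt (2 * Real.log (1 / δ) / n) with hε
  set S : Set (Fin n → X) := {ω | ∑ x : X, |p x - (1 / n) * Nc n x ω| ≤ ε} with hS
  have hgoal_set : {ω : Fin n → X | ∑ x : X,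
      |(P {x}).toReal - (1 / n) * ∑ i : Fin n, (if ω i = x then (1 : ℝ) else 0)| ≤ ε} = S := rfl
  rw [hgoal_set]
  have hSmeas : MeasurableSet S := (Set.toFinite S).measurableSet
  have hsingle : ∀ ω : Fin n → X, μπ {ω} = ENNReal.ofReal (W p n ω) := by
    intro ω
    have h1 : ({ω} : Set (Fin n → X)) = Set.pi Set.univ (fun i => {ω i}) := by
      ext ρ
      simp [Set.mem_pi, funext_iff]
    rw [hμπ, h1, Measure.pi_pi]
    rw [W]
    rw [ENNReal.ofReal_prod_of_nonneg (fun i _ => hp (ω i))]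
    exact Finset.prod_congr rfl fun i _ => (ENNReal.ofReal_toReal (measure_ne_top P _)).symm
  set tB := (Set.toFinite Sᶜ).toFinset with htB
  have hBmeas : μπ Sᶜ = ENNReal.ofReal (∑ ω ∈ tB, W p n ω) := by
    have h1 : (Sᶜ : Set (Fin n → X)) = ↑tB := (Set.Finite.coe_toFinset _).symm
    rw [h1, meas_coe]
    have hWnn : ∀ ω : Fin n → X, 0 ≤ W p n ω := fun ω => Finset.prod_nonneg fun i _ => hp (ω i)
    rw [ENNReal.ofReal_sum_of_nonneg (fun ω _ => hWnn ω)]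
    exact Finset.sum_congr rfl fun ω _ => hsingle ω
  have hBle : μπ Sᶜ ≤ ENNReal.ofReal δ := by
    rw [hBmeas]
    apply ENNReal.ofReal_le_ofReal
    have hset : tB = Finset.univ.filter (fun ω : Fin n → X =>
        ¬ (∑ x, |p x - (1 / n) * Nc n x ω| ≤
          Real.sqrt (Fintype.card X / n) + Real.sqrt (2 * Real.log (1 / δ) / n))) := by
      ext ω
      simp [htB, hS, hε, Set.Finite.mem_toFinset]
    rw [hset]
    exact discrete_main p hp hp1 n hn δ hδ
  have hcompl : μπ S + μπ Sᶜ = 1 := by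
    rw [measure_add_measure_compl hSmeas]
    exact measure_univ
  obtain ⟨hδ0, hδ1⟩ := hδ
  calc ENNReal.ofReal (1 - δ) = 1 - ENNReal.ofReal δ := by
        rw [← ENNReal.ofReal_one, ← ENNReal.ofReal_sub _ hδ0.le]
    _ ≤ 1 - μπ Sᶜ := tsub_le_tsub_left hBle 1
    _ ≤ μπ S := by
        rw [tsub_le_iff_right]
        exact le_of_eq hcompl.symm
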